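/- Let R be an associative ring with involution *, let P be a prime ideal of R such that R/P has characteristic different from 2, and suppose * is of P-second kind (Z(R) ∩ S(R) is not contained in P). If d is a derivation of R such that the image of d(x)d(x*) lies in Z(R/P) for all x ∈ R, then d(R) ⊆ P or R/P is an integral domain. -/

import Mathlib

private lemma st10_cent_pull {R : Type*} [Ring R] {c : R} (hc : ∀ u : R, c * u = u * c)
    (a r : R) : (c * a) * r - r * (c * a) = c * (a * r - r * a) := by
  rw [show r * (c * a) = c * (r * a) by rw [← mul_assoc, ← hc, mul_assoc], mul_sub, mul_assoc]

/-- Corollary 7.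
Let `R` be a ring with involution `*`, `P` a prime ideal of `R` with `char (R/P) ≠ 2`
(equivalently, since `P` is proper, `(2 : R) ∉ P`), and suppose `*` is of `P`-second kind
(`Z(R) ∩ S(R) ⊄ P`).  If `d` is a derivation of `R` such that the image of `d(x)d(x*)`
lies in `Z(R/P)` for all `x ∈ R`, then `d(R) ⊆ P` or `R/P` is an integral domain. -/
theorem statement10 {R : Type*} [Ring R] [StarRing R] (P : TwoSidedIdeal R)
    (hP_proper : (1 : R) ∉ P)
    (hP_prime : ∀ a b : R, (∀ r : R, a * r * b ∈ P) → a ∈ P ∨ b ∈ P)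
    (hchar : (2 : R) ∉ P)
    (hsecond : ∃ s : R, (∀ r : R, s * r = r * s) ∧ star s = -s ∧ s ∉ P)
    (d : R → R)
    (hd_add : ∀ x y : R, d (x + y) = d x + d y)
    (hd_mul : ∀ x y : R, d (x * y) = d x * y + x * d y)
    -- `d(x)d(x*)` is central modulo `P` for all `x`
    (h : ∀ x r : R, (d x * d (star x)) * r - r * (d x * d (star x)) ∈ P) :
    (∀ x : R, d x ∈ P)
      ∨ ((1 : R) ∉ P ∧ (∀ x y : R, x * y - y * x ∈ P) ∧
          (∀ x y : R, x * y ∈ P → x ∈ P ∨ y ∈ P)) := by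
  obtain ⟨s, hs, hss, hsP⟩ := hsecond
  -- basic derivation facts
  have hd0 : d 0 = 0 := by
    have h0 := hd_add 0 0
    rw [add_zero] at h0
    exact (right_eq_add.mp h0)
  have hdneg : ∀ x : R, d (-x) = -d x := by
    intro x
    have h0 := hd_add x (-x)
    rw [add_neg_cancel, hd0] at h0
    exact eq_neg_of_add_eq_zero_right h0.symm
  have hd_sub : ∀ a b : R, d (a - b) = d a - d b := by
    intro a b
    rw [sub_eq_add_neg, hd_add, hdneg, ← sub_eq_add_neg]
  -- the derivative of the central element s is central
  have ht : ∀ u : R, d s * u = u * d s := by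
    intro u
    have h1 := hd_mul s u
    have h2 := hd_mul u s
    have e : d s * u + s * d u = d u * s + u * d s := by rw [← h1, ← h2, hs u]
    rw [hs (d u)] at e
    have e3 : d s * u + d u * s = u * d s + d u * s := by rw [e, add_comm]
    exact add_right_cancel e3
  -- cancellation of a central element not in P
  have cancel : ∀ a : R, (∀ u : R, a * u = u * a) → a ∉ P → ∀ b : R, a * b ∈ P → b ∈ P := by
    intro a ha haP b hab
    rcases hP_prime a b (fun r => by rw [ha r, mul_assoc]; exact P.mul_mem_left _ _ hab) with
      hc | hc
    · exact absurd hc haP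
    · exact hc
  have cancel2 : ∀ b : R, b + b ∈ P → b ∈ P := by
    intro b hb
    rcases hP_prime 2 b (fun u => by
      rw [show (2 : R) * u * b = u * (b + b) from by rw [two_mul, add_mul, mul_add]]
      exact P.mul_mem_left _ _ hb) with hc | hc
    · exact absurd hc hchar
    · exact hc
  -- product of central elements is central
  have cmul : ∀ a b : R, (∀ u : R, a * u = u * a) → (∀ u : R, b * u = u * b) →
      ∀ u : R, (a * b) * u = u * (a * b) := by
    intro a b ha hb u
    rw [mul_assoc, hb u, ← mul_assoc, ha u, mul_assoc]
  -- star facts about s * y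
  have hstar_sy : ∀ y : R, star (s * y) = -(s * star y) := by
    intro y
    rw [star_mul, hss, mul_neg, ← hs (star y)]
  have hd_star_sy : ∀ y : R, d (star (s * y)) = -(d s * star y + s * d (star y)) := by
    intro y
    rw [hstar_sy y, hdneg, hd_mul]
  -- linearization of h
  have hA : ∀ x y r : R, (d x * d (star y) + d y * d (star x)) * r
      - r * (d x * d (star y) + d y * d (star x)) ∈ P := by
    intro x y r
    have hxy := h (x + y) r
    rw [star_add, hd_add, hd_add] at hxy
    have hm := P.sub_mem (P.sub_mem hxy (h x r)) (h y r)
    rw [show ((d x + d y) * (d (star x) + d (star y))) * r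
        - r * ((d x + d y) * (d (star x) + d (star y)))
        - (d x * d (star x) * r - r * (d x * d (star x)))
        - (d y * d (star y) * r - r * (d y * d (star y)))
        = (d x * d (star y) + d y * d (star x)) * r
          - r * (d x * d (star y) + d y * d (star x)) from by noncomm_ring] at hm
    exact hm
  by_cases hcomm : ∀ x y : R, x * y - y * x ∈ P
  · -- commutative case: R/P is an integral domain
    right
    refine ⟨hP_proper, hcomm, ?_⟩
    intro x y hxy
    apply hP_prime x y
    intro r
    have hm := P.add_mem (P.mul_mem_right _ y (hcomm x r)) (P.mul_mem_left r _ hxy)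
    rw [show (x * r - r * x) * y + r * (x * y) = x * r * y from by noncomm_ring] at hm
    exact hm
  · -- noncommutative case: show d(R) ⊆ P
    left
    push_neg at hcomm
    obtain ⟨u₀, v₀, hnc⟩ := hcomm
    -- Phase 1 : d(x)d(y) is central mod P for all x, y
    have hB : ∀ x y r : R, (d x * d y) * r - r * (d x * d y) ∈ P := by
      by_cases htP : d s ∈ P
      · -- case d s ∈ P
        have hBstar : ∀ x y r : R,
            (d y * d (star x)) * r - r * (d y * d (star x)) ∈ P := by
          intro x y r
          have h1 := hA x (s * y) r
          rw [hd_star_sy y, hd_mul s y] at h1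
          have h2 : (s * (d x * d (star y) + d y * d (star x))) * r
              - r * (s * (d x * d (star y) + d y * d (star x))) ∈ P := by
            rw [st10_cent_pull hs]
            exact P.mul_mem_left _ _ (hA x y r)
          have hq : d s * (y * d (star x)) - d x * (d s * star y) ∈ P :=
            P.sub_mem (P.mul_mem_right _ _ htP)
              (P.mul_mem_left _ _ (P.mul_mem_right _ _ htP))
          have hq' : (d s * (y * d (star x)) - d x * (d s * star y)) * r
              - r * (d s * (y * d (star x)) - d x * (d s * star y)) ∈ P :=
            P.sub_mem (P.mul_mem_right _ _ hq) (P.mul_mem_left _ _ hq)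
          have hsum := P.sub_mem (P.add_mem h1 h2) hq'
          rw [show (d x * -(d s * star y + s * d (star y)) + (d s * y + s * d y) * d (star x)) * r
              - r * (d x * -(d s * star y + s * d (star y)) + (d s * y + s * d y) * d (star x))
              + ((s * (d x * d (star y) + d y * d (star x))) * r
                - r * (s * (d x * d (star y) + d y * d (star x))))
              - ((d s * (y * d (star x)) - d x * (d s * star y)) * r
                - r * (d s * (y * d (star x)) - d x * (d s * star y)))
              = (s * (d y * d (star x) + d y * d (star x))) * r
                - r * (s * (d y * d (star x) + d y * d (star x))) from by
            rw [mul_add s (d x * d (star y)) (d y * d (star x)),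
              show s * (d x * d (star y)) = d x * (s * d (star y)) from by
                rw [← mul_assoc, hs (d x), mul_assoc]]
            noncomm_ring] at hsum
          have h3 : (d y * d (star x) + d y * d (star x)) * r
              - r * (d y * d (star x) + d y * d (star x)) ∈ P :=
            cancel s hs hsP _ (by rw [← st10_cent_pull hs]; exact hsum)
          apply cancel2
          rw [show ((d y * d (star x)) * r - r * (d y * d (star x)))
              + ((d y * d (star x)) * r - r * (d y * d (star x)))
              = (d y * d (star x) + d y * d (star x)) * r
                - r * (d y * d (star x) + d y * d (star x)) from by noncomm_ring]
          exact h3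
        intro x y r
        have hm := hBstar (star y) x r
        rwa [star_star] at hm
      · -- case d s ∉ P : derive commutativity of R/P, contradiction
        exfalso
        have Ck : ∀ y r : R, (d (star y) - d y) * r - r * (d (star y) - d y) ∈ P := by
          intro y r
          have h1 := hA s y r
          rw [hss, hdneg] at h1
          rw [show d s * d (star y) + d y * -d s = d s * (d (star y) - d y) from by
            rw [mul_neg, ← ht (d y)]; noncomm_ring] at h1
          exact cancel (d s) ht htP _ (by rw [← st10_cent_pull ht]; exact h1)
        have hskew : ∀ z : R, star z = -z → ∀ r : R, d z * r - r * d z ∈ P := by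
          intro z hz r
          have h1 := Ck z r
          rw [hz, hdneg] at h1
          have h2 := P.neg_mem h1
          rw [show -((-d z - d z) * r - r * (-d z - d z))
              = (d z * r - r * d z) + (d z * r - r * d z) from by noncomm_ring] at h2
          exact cancel2 _ h2
        have hzskew : ∀ w : R, star w = -w → star (s * (s * w)) = -(s * (s * w)) := by
          intro w hw
          rw [star_mul, star_mul, hss, hw, neg_mul_neg, mul_neg, ← hs w, mul_assoc, ← hs w]
        have hc3 : ∀ u : R, (d s * s) * u = u * (d s * s) := cmul (d s) s ht hs
        have hc3P : d s * s ∉ P := by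
          intro hm
          rcases hP_prime (d s) s (fun u => by
            rw [ht u, mul_assoc]; exact P.mul_mem_left _ _ hm) with hc | hc
          · exact htP hc
          · exact hsP hc
        have Cw : ∀ y r : R, (y - star y) * r - r * (y - star y) ∈ P := by
          intro y r
          have hwsk : star (y - star y) = -(y - star y) := by
            rw [star_sub, star_star, neg_sub]
          have h3 := hskew (s * (s * (y - star y))) (hzskew _ hwsk) r
          rw [show d (s * (s * (y - star y)))
              = d s * (s * (y - star y))
                + s * (d s * (y - star y) + s * (d y - d (star y))) from by
            rw [hd_mul, hd_mul, hd_sub]] at h3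
          have h4 : (s * (s * (d (star y) - d y))) * r
              - r * (s * (s * (d (star y) - d y))) ∈ P := by
            rw [st10_cent_pull hs, st10_cent_pull hs]
            exact P.mul_mem_left _ _ (P.mul_mem_left _ _ (Ck y r))
          have h5 := P.add_mem h3 h4
          rw [show (d s * (s * (y - star y))
                + s * (d s * (y - star y) + s * (d y - d (star y)))) * r
              - r * (d s * (s * (y - star y))
                + s * (d s * (y - star y) + s * (d y - d (star y))))
              + ((s * (s * (d (star y) - d y))) * r - r * (s * (s * (d (star y) - d y))))
              = ((d s * s) * ((y - star y) + (y - star y))) * r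
                - r * ((d s * s) * ((y - star y) + (y - star y))) from by
            rw [mul_add s (d s * (y - star y)) (s * (d y - d (star y))),
              show s * (d s * (y - star y)) = (d s * s) * (y - star y) from by
                rw [← mul_assoc, ← ht s]]
            noncomm_ring] at h5
          have h6 : ((y - star y) + (y - star y)) * r - r * ((y - star y) + (y - star y)) ∈ P :=
            cancel _ hc3 hc3P _ (by rw [← st10_cent_pull hc3]; exact h5)
          apply cancel2
          rw [show ((y - star y) * r - r * (y - star y)) + ((y - star y) * r - r * (y - star y))
              = ((y - star y) + (y - star y)) * r - r * ((y - star y) + (y - star y)) from by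
            noncomm_ring]
          exact h6
        have commAll : ∀ y r : R, y * r - r * y ∈ P := by
          intro y r
          have h1 := Cw (s * y) r
          rw [hstar_sy] at h1
          rw [show s * y - -(s * star y) = s * (y + star y) from by
            rw [sub_neg_eq_add, ← mul_add]] at h1
          have h2 : (y + star y) * r - r * (y + star y) ∈ P :=
            cancel s hs hsP _ (by rw [← st10_cent_pull hs]; exact h1)
          have h3 := P.add_mem h2 (Cw y r)
          apply cancel2
          rw [show (y * r - r * y) + (y * r - r * y)
              = ((y + star y) * r - r * (y + star y)) + ((y - star y) * r - r * (y - star y))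
              from by noncomm_ring]
          exact h3
        exact hnc (commAll u₀ v₀)
    -- Phase 2 : conclude d(R) ⊆ P
    -- (D) : [d x * m * d r, r] ∈ P
    have hD : ∀ x m r : R, (d x * m * d r) * r - r * (d x * m * d r) ∈ P := by
      intro x m r
      have h1 := hB x (m * r) r
      rw [hd_mul m r] at h1
      have h2 : ((d x * d m) * r) * r - r * ((d x * d m) * r) ∈ P := by
        rw [show ((d x * d m) * r) * r - r * ((d x * d m) * r)
            = ((d x * d m) * r - r * (d x * d m)) * r from by noncomm_ring]
        exact P.mul_mem_right _ _ (hB x m r)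
      have hm := P.sub_mem h1 h2
      rw [show (d x * (d m * r + m * d r)) * r - r * (d x * (d m * r + m * d r))
          - (((d x * d m) * r) * r - r * ((d x * d m) * r))
          = (d x * m * d r) * r - r * (d x * m * d r) from by noncomm_ring] at hm
      exact hm
    -- (E1) : [d x * y, r] * (d w * d r) ∈ P
    have hE1 : ∀ x y w r : R,
        ((d x * y) * r - r * (d x * y)) * (d w * d r) ∈ P := by
      intro x y w r
      have h1 := hD x (y * d w) r
      have h2 : (d x * y) * ((d w * d r) * r - r * (d w * d r)) ∈ P :=
        P.mul_mem_left _ _ (hB w r r)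
      have hm := P.sub_mem h1 h2
      rw [show (d x * (y * d w) * d r) * r - r * (d x * (y * d w) * d r)
          - (d x * y) * ((d w * d r) * r - r * (d w * d r))
          = ((d x * y) * r - r * (d x * y)) * (d w * d r) from by noncomm_ring] at hm
      exact hm
    -- primeness split
    have hE1disj : ∀ x y w r : R,
        ((d x * y) * r - r * (d x * y) ∈ P) ∨ (d w * d r ∈ P) := by
      intro x y w r
      apply hP_prime
      intro z
      have h1 : ((d x * y) * r - r * (d x * y)) * ((d w * d r) * z - z * (d w * d r)) ∈ P :=
        P.mul_mem_left _ _ (hB w r z)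
      have hm := P.sub_mem (P.mul_mem_right _ z (hE1 x y w r)) h1
      rw [show (((d x * y) * r - r * (d x * y)) * (d w * d r)) * z
          - ((d x * y) * r - r * (d x * y)) * ((d w * d r) * z - z * (d w * d r))
          = ((d x * y) * r - r * (d x * y)) * z * (d w * d r) from by noncomm_ring] at hm
      exact hm
    -- if all [d x * y, v] ∈ P then d x ∈ P or v is central mod P
    have hCfC : ∀ v : R, (∀ x y : R, (d x * y) * v - v * (d x * y) ∈ P) →
        ∀ x y : R, d x ∈ P ∨ y * v - v * y ∈ P := by
      intro v hv x y
      have hdx : d x * v - v * d x ∈ P := by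
        have hm := hv x 1
        rwa [mul_one] at hm
      have h6 : ∀ y : R, d x * (y * v - v * y) ∈ P := by
        intro y
        have hm := P.sub_mem (hv x y) (P.mul_mem_right _ y hdx)
        rw [show (d x * y) * v - v * (d x * y) - (d x * v - v * d x) * y
            = d x * (y * v - v * y) from by noncomm_ring] at hm
        exact hm
      apply hP_prime
      intro z
      have hm := P.sub_mem (h6 (z * y)) (P.mul_mem_right _ y (h6 z))
      rw [show d x * (z * y * v - v * (z * y)) - (d x * (z * v - v * z)) * y
          = d x * z * (y * v - v * y) from by noncomm_ring] at hm
      exact hm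
    by_cases hall : ∀ w r : R, d w * d r ∈ P
    · -- then d w * r * d u ∈ P for all, and primeness finishes
      intro v
      have key : ∀ r : R, d v * r * d v ∈ P := by
        intro r
        have h1 := hall v (r * v)
        rw [hd_mul r v] at h1
        have h2 : d v * (d r * v) ∈ P := by
          rw [← mul_assoc]
          exact P.mul_mem_right _ _ (hall v r)
        have hm := P.sub_mem h1 h2
        rw [show d v * (d r * v + r * d v) - d v * (d r * v) = d v * r * d v from by
          noncomm_ring] at hm
        exact hm
      rcases hP_prime (d v) (d v) key with hc | hc
      · exact hc
      · exact hc
    · push_neg at hall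
      obtain ⟨w₀, r₀, hw0⟩ := hall
      have hdw0 : d w₀ ∉ P := fun hm => hw0 (P.mul_mem_right _ _ hm)
      -- every u is central mod P or d w₀ * d u ∈ P
      have hu_disj : ∀ u : R, (∀ y : R, y * u - u * y ∈ P) ∨ d w₀ * d u ∈ P := by
        intro u
        by_cases hc : d w₀ * d u ∈ P
        · exact Or.inr hc
        · left
          have hv : ∀ x y : R, (d x * y) * u - u * (d x * y) ∈ P := by
            intro x y
            rcases hE1disj x y w₀ u with hc1 | hc1
            · exact hc1
            · exact absurd hc1 hc
          intro y
          rcases hCfC u hv w₀ y with hc1 | hc1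
          · exact absurd hc1 hdw0
          · exact hc1
      by_cases hall2 : ∀ u : R, d w₀ * d u ∈ P
      · -- then d w₀ * r * d u ∈ P for all r,u, so d u ∈ P
        intro v
        have key : ∀ r : R, d w₀ * r * d v ∈ P := by
          intro r
          have h1 := hall2 (r * v)
          rw [hd_mul r v] at h1
          have h2 : d w₀ * (d r * v) ∈ P := by
            rw [← mul_assoc]
            exact P.mul_mem_right _ _ (hall2 r)
          have hm := P.sub_mem h1 h2
          rw [show d w₀ * (d r * v + r * d v) - d w₀ * (d r * v) = d w₀ * r * d v from by
            noncomm_ring] at hm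
          exact hm
        rcases hP_prime (d w₀) (d v) key with hc | hc
        · exact absurd hc hdw0
        · exact hc
      · -- there is a central u₁ with d w₀ * d u₁ ∉ P ; then everything is central : contradiction
        exfalso
        push_neg at hall2
        obtain ⟨u₁, hu₁⟩ := hall2
        have hu₁c : ∀ y : R, y * u₁ - u₁ * y ∈ P := by
          rcases hu_disj u₁ with hc | hc
          · exact hc
          · exact absurd hc hu₁
        have hallc : ∀ v y : R, y * v - v * y ∈ P := by
          intro v y
          rcases hu_disj v with hc | hc
          · exact hc y
          · rcases hu_disj (v + u₁) with hc1 | hc1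
            · have hm := P.sub_mem (hc1 y) (hu₁c y)
              rw [show y * (v + u₁) - (v + u₁) * y - (y * u₁ - u₁ * y)
                  = y * v - v * y from by noncomm_ring] at hm
              exact hm
            · exfalso
              rw [hd_add v u₁, mul_add] at hc1
              have hm := P.sub_mem hc1 hc
              rw [show d w₀ * d v + d w₀ * d u₁ - d w₀ * d v = d w₀ * d u₁ from by
                noncomm_ring] at hm
              exact hu₁ hm
        exact hnc (hallc v₀ u₀)
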